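/- Let (p_t, P_T) be a drift process and let A, B, C ∈ ℬ be pairwise disjoint sets with P_T(A) > 0, P_T(B) > 0, P_T(C) > 0. If p_A = p_{B ∪ C} and p_{A ∪ C} = p_B, then p_A = p_B = p_C. -/

import Mathlib

open MeasureTheory ProbabilityTheory

/-- The `𝔗`-invariant model of a drift process over a non-null set `A`:
the probability measure `p_A(D) = P_T(A)⁻¹ ∫_A p_t(D) dP_T(t)`. -/
noncomputable def invariantModel {𝔗 𝔛 : Type*} [MeasurableSpace 𝔗] [MeasurableSpace 𝔛]
    (p : Kernel 𝔗 𝔛) (PT : Measure 𝔗) (A : Set 𝔗) : Measure 𝔛 :=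
  (PT A)⁻¹ • (PT.restrict A).bind (fun t => p t)

lemma invariantModel_apply {𝔗 𝔛 : Type*} [MeasurableSpace 𝔗] [MeasurableSpace 𝔛]
    (p : Kernel 𝔗 𝔛) (PT : Measure 𝔗) (A : Set 𝔗) {D : Set 𝔛} (hD : MeasurableSet D) :
    invariantModel p PT A D = (PT A)⁻¹ * ∫⁻ t in A, p t D ∂PT := by
  rw [invariantModel, Measure.smul_apply, smul_eq_mul,
    Measure.bind_apply hD (Kernel.measurable p).aemeasurable]

/-- If `A, B, C` are pairwise disjoint non-null measurable sets with
`p_A = p_{B ∪ C}` and `p_{A ∪ C} = p_B`, then `p_A = p_B = p_C`. -/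
theorem invariantModel_eq_of_cross_covering {𝔗 𝔛 : Type*} [MeasurableSpace 𝔗]
    [MeasurableSpace 𝔛] (p : Kernel 𝔗 𝔛) [IsMarkovKernel p]
    (PT : Measure 𝔗) [IsProbabilityMeasure PT]
    {A B C : Set 𝔗} (hA : MeasurableSet A) (hB : MeasurableSet B) (hC : MeasurableSet C)
    (hAB : Disjoint A B) (hAC : Disjoint A C) (hBC : Disjoint B C)
    (hApos : 0 < PT A) (hBpos : 0 < PT B) (hCpos : 0 < PT C)
    (h1 : invariantModel p PT A = invariantModel p PT (B ∪ C))
    (h2 : invariantModel p PT (A ∪ C) = invariantModel p PT B) :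
    invariantModel p PT A = invariantModel p PT B ∧
      invariantModel p PT B = invariantModel p PT C := by
  have hfin : ∀ (X : Set 𝔗) (D : Set 𝔛), (∫⁻ t in X, p t D ∂PT) ≠ ⊤ := by
    intro X D
    refine ne_top_of_le_ne_top (measure_ne_top PT X) ?_
    calc ∫⁻ t in X, p t D ∂PT ≤ ∫⁻ _ in X, 1 ∂PT :=
          lintegral_mono fun t => prob_le_one
      _ = PT X := by simp
  set a := (PT A).toReal with ha
  set b := (PT B).toReal with hb
  set c := (PT C).toReal with hc
  have hA0 : PT A ≠ 0 := hApos.ne'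
  have hB0 : PT B ≠ 0 := hBpos.ne'
  have hC0 : PT C ≠ 0 := hCpos.ne'
  have hapos : 0 < a := ENNReal.toReal_pos hA0 (measure_ne_top _ _)
  have hbpos : 0 < b := ENNReal.toReal_pos hB0 (measure_ne_top _ _)
  have hcpos : 0 < c := ENNReal.toReal_pos hC0 (measure_ne_top _ _)
  have key : ∀ D : Set 𝔛, MeasurableSet D →
      b * (∫⁻ t in A, p t D ∂PT).toReal = a * (∫⁻ t in B, p t D ∂PT).toReal ∧
      c * (∫⁻ t in A, p t D ∂PT).toReal = a * (∫⁻ t in C, p t D ∂PT).toReal := by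
    intro D hD
    set x := (∫⁻ t in A, p t D ∂PT).toReal with hx
    set y := (∫⁻ t in B, p t D ∂PT).toReal with hy
    set z := (∫⁻ t in C, p t D ∂PT).toReal with hz
    have hBC' : ∫⁻ t in B ∪ C, p t D ∂PT
        = (∫⁻ t in B, p t D ∂PT) + ∫⁻ t in C, p t D ∂PT :=
      lintegral_union hC hBC
    have hAC' : ∫⁻ t in A ∪ C, p t D ∂PT
        = (∫⁻ t in A, p t D ∂PT) + ∫⁻ t in C, p t D ∂PT :=
      lintegral_union hC hAC
    have hmBC : PT (B ∪ C) = PT B + PT C := measure_union hBC hC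
    have hmAC : PT (A ∪ C) = PT A + PT C := measure_union hAC hC
    have e1 := congrArg ENNReal.toReal (by
      rw [h1] : invariantModel p PT A D = invariantModel p PT (B ∪ C) D)
    have e2 := congrArg ENNReal.toReal (by
      rw [h2] : invariantModel p PT (A ∪ C) D = invariantModel p PT B D)
    rw [invariantModel_apply p PT A hD, invariantModel_apply p PT (B ∪ C) hD,
      hBC', hmBC, ENNReal.toReal_mul, ENNReal.toReal_mul, ENNReal.toReal_inv,
      ENNReal.toReal_inv, ENNReal.toReal_add (measure_ne_top _ _) (measure_ne_top _ _),
      ENNReal.toReal_add (hfin B D) (hfin C D)] at e1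
    rw [invariantModel_apply p PT (A ∪ C) hD, invariantModel_apply p PT B hD,
      hAC', hmAC, ENNReal.toReal_mul, ENNReal.toReal_mul, ENNReal.toReal_inv,
      ENNReal.toReal_inv, ENNReal.toReal_add (measure_ne_top _ _) (measure_ne_top _ _),
      ENNReal.toReal_add (hfin A D) (hfin C D)] at e2
    rw [← ha, ← hb, ← hc, ← hx, ← hy, ← hz] at e1 e2
    have e1' : (b + c) * x = a * (y + z) := by
      field_simp at e1; linarith [e1]
    have e2' : b * (x + z) = (a + c) * y := by
      field_simp at e2; linarith [e2]
    have habc : a + b + c ≠ 0 := by positivity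
    have k1 : b * x = a * y := by
      have : b * (a + b + c) * x = a * (a + b + c) * y := by ring_nf; nlinarith [e1', e2']
      have := mul_left_cancel₀ habc (by linarith [this] : (a + b + c) * (b * x) = (a + b + c) * (a * y))
      exact this
    refine ⟨k1, by linarith [e1', k1]⟩
  have conv : ∀ X Y : Set 𝔗, PT X ≠ 0 →  PT Y ≠ 0 →
      (∀ D : Set 𝔛, MeasurableSet D →
        (PT Y).toReal * (∫⁻ t in X, p t D ∂PT).toReal
          = (PT X).toReal * (∫⁻ t in Y, p t D ∂PT).toReal) →
      invariantModel p PT X = invariantModel p PT Y := by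
    intro X Y hX0 hY0 h
    ext D hD
    rw [invariantModel_apply p PT X hD, invariantModel_apply p PT Y hD]
    have hXt : (PT X)⁻¹ * (∫⁻ t in X, p t D ∂PT) ≠ ⊤ :=
      ENNReal.mul_ne_top (ENNReal.inv_ne_top.2 hX0) (hfin X D)
    have hYt : (PT Y)⁻¹ * (∫⁻ t in Y, p t D ∂PT) ≠ ⊤ :=
      ENNReal.mul_ne_top (ENNReal.inv_ne_top.2 hY0) (hfin Y D)
    rw [← ENNReal.toReal_eq_toReal_iff' hXt hYt, ENNReal.toReal_mul, ENNReal.toReal_mul,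
      ENNReal.toReal_inv, ENNReal.toReal_inv]
    have hXp : 0 < (PT X).toReal := ENNReal.toReal_pos hX0 (measure_ne_top _ _)
    have hYp : 0 < (PT Y).toReal := ENNReal.toReal_pos hY0 (measure_ne_top _ _)
    have := h D hD
    field_simp
    linarith [this]
  refine ⟨conv A B hA0 hB0 fun D hD => (key D hD).1, ?_⟩
  have hab := conv A B hA0 hB0 fun D hD => (key D hD).1
  have hac := conv A C hA0 hC0 fun D hD => (key D hD).2
  rw [← hab, hac]
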